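/- (Relative entropy decomposition for product reference states.) Let Γ be a positive definite density matrix on ℂᵐ ⊗ ℂⁿ (i.e. a positive definite Hermitian matrix indexed by (Fin m × Fin n) with trace 1), and let A, B be positive definite density matrices on ℂᵐ and ℂⁿ respectively. Let Γ₁ be the partial trace of Γ over the second factor, (Γ₁)_{i,i'} = Σ_j Γ_{(i,j),(i',j)}, and Γ₂ the partial trace over the first factor, (Γ₂)_{j,j'} = Σ_i Γ_{(i,j),(i,j')}; both are positive definite density matrices. Then H(Γ, A ⊗ B) = H(Γ, Γ₁ ⊗ Γ₂) + H(Γ₁, A) + H(Γ₂, B), where ⊗ denotes the Kronecker product. -/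

import Mathlib

open Matrix
open scoped Kronecker ComplexOrder

/-- Functional calculus for Hermitian matrices: apply `f` to the eigenvalues. -/
noncomputable def matFun {ι : Type*} [Fintype ι] [DecidableEq ι]
    (f : ℝ → ℝ) (M : Matrix ι ι ℂ) : Matrix ι ι ℂ :=
  if h : M.IsHermitian then
    (h.eigenvectorUnitary : Matrix ι ι ℂ) *
      Matrix.diagonal (fun i => (f (h.eigenvalues i) : ℂ)) *
      star (h.eigenvectorUnitary : Matrix ι ι ℂ)
  else 0

/-- Matrix logarithm via the functional calculus. -/
noncomputable def matLog {ι : Type*} [Fintype ι] [DecidableEq ι] (M : Matrix ι ι ℂ) :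
    Matrix ι ι ℂ :=
  matFun Real.log M

/-- The quantum relative entropy `H(Γ, Γ') = Tr[Γ (log Γ - log Γ')]`. -/
noncomputable def relEnt {ι : Type*} [Fintype ι] [DecidableEq ι] (Γ Γ' : Matrix ι ι ℂ) : ℂ :=
  (Γ * (matLog Γ - matLog Γ')).trace

/-- Partial trace over the second tensor factor. -/
noncomputable def ptrace₂ {m n : ℕ} (Γ : Matrix (Fin m × Fin n) (Fin m × Fin n) ℂ) :
    Matrix (Fin m) (Fin m) ℂ :=
  Matrix.of fun i i' => ∑ j : Fin n, Γ (i, j) (i', j)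

/-- Partial trace over the first tensor factor. -/
noncomputable def ptrace₁ {m n : ℕ} (Γ : Matrix (Fin m × Fin n) (Fin m × Fin n) ℂ) :
    Matrix (Fin n) (Fin n) ℂ :=
  Matrix.of fun j j' => ∑ i : Fin m, Γ (i, j) (i, j')


open Polynomial

set_option linter.unnecessarySimpa false
set_option linter.unusedTactic false

lemma aeval_unitary_conj {ι : Type*} [Fintype ι] [DecidableEq ι]
    (U : Matrix ι ι ℂ) (hU : U ∈ Matrix.unitaryGroup ι ℂ)
    (D : Matrix ι ι ℂ) (p : ℝ[X]) :
    aeval (U * D * star U) p = U * aeval D p * star U := by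
  have h1 : U * star U = 1 := Matrix.mem_unitaryGroup_iff.mp hU
  have h2 : star U * U = 1 := Matrix.mem_unitaryGroup_iff'.mp hU
  let φ : Matrix ι ι ℂ →ₐ[ℝ] Matrix ι ι ℂ :=
    { toFun := fun x => U * x * star U
      map_one' := by simp [h1]
      map_mul' := fun x y => by
        show U * (x * y) * star U = (U * x * star U) * (U * y * star U)
        calc U * (x * y) * star U = U * x * (star U * U) * y * star U := by
              rw [h2]; noncomm_ring
          _ = (U * x * star U) * (U * y * star U) := by noncomm_ring
      map_zero' := by simp
      map_add' := fun x y => by show U * (x + y) * star U = _; noncomm_ring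
      commutes' := fun r => by
        show U * algebraMap ℝ (Matrix ι ι ℂ) r * star U = _
        simp only [Algebra.algebraMap_eq_smul_one]
        rw [mul_smul_comm, smul_mul_assoc, mul_one, h1] }
  exact aeval_algHom_apply φ D p

lemma aeval_diagonal {ι : Type*} [Fintype ι] [DecidableEq ι] (d : ι → ℝ) (p : ℝ[X]) :
    aeval (Matrix.diagonal (fun i => (d i : ℂ))) p
      = Matrix.diagonal (fun i => ((p.eval (d i) : ℝ) : ℂ)) := by
  have h := aeval_algHom_apply (Matrix.diagonalAlgHom (n := ι) (α := ℂ) ℝ) (fun i => (d i : ℂ)) p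
  simp only [Matrix.diagonalAlgHom_apply] at h
  rw [h]
  have key : (aeval (fun i => ((d i : ℂ)))) p = fun i => ((p.eval (d i) : ℝ) : ℂ) := by
    funext i
    have h2 := aeval_algHom_apply (Pi.evalAlgHom ℝ (fun _ : ι => ℂ) i) (fun i => (d i : ℂ)) p
    simp only [Pi.evalAlgHom_apply] at h2
    rw [← h2]
    have : ((d i : ℂ)) = algebraMap ℝ ℂ (d i) := rfl
    rw [this, aeval_algebraMap_apply_eq_algebraMap_eval]
    simp
  rw [key]

lemma matFun_conj {ι : Type*} [Fintype ι] [DecidableEq ι]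
    (f : ℝ → ℝ) (U : Matrix ι ι ℂ) (hU : U ∈ Matrix.unitaryGroup ι ℂ) (d : ι → ℝ) :
    matFun f (U * Matrix.diagonal (fun i => (d i : ℂ)) * star U)
      = U * Matrix.diagonal (fun i => (f (d i) : ℂ)) * star U := by
  set M := U * Matrix.diagonal (fun i => (d i : ℂ)) * star U with hMdef
  have hM : M.IsHermitian := by
    unfold Matrix.IsHermitian
    rw [hMdef]
    have hst : (star fun i => ((d i : ℂ))) = fun i => ((d i : ℂ)) :=
      funext fun i => by simpa using Complex.conj_ofReal (d i)
    simp only [Matrix.star_eq_conjTranspose, Matrix.conjTranspose_mul,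
      Matrix.conjTranspose_conjTranspose, Matrix.diagonal_conjTranspose, hst, mul_assoc]
  rw [matFun, dif_pos hM]
  set V : Matrix ι ι ℂ := (hM.eigenvectorUnitary : Matrix ι ι ℂ) with hV
  have hVmem : V ∈ Matrix.unitaryGroup ι ℂ := hM.eigenvectorUnitary.2
  set e : ι → ℝ := hM.eigenvalues with he
  have hspec : M = V * Matrix.diagonal (fun i => (e i : ℂ)) * star V := by
    have := hM.spectral_theorem
    rw [Unitary.conjStarAlgAut_apply] at this
    exact this
  classical
  set s : Finset ℝ := Finset.image d Finset.univ ∪ Finset.image e Finset.univ with hs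
  set p : ℝ[X] := Lagrange.interpolate s id f with hp
  have hps : ∀ x ∈ s, p.eval x = f x := fun x hx =>
    by simpa [hp] using Lagrange.eval_interpolate_at_node (v := id) (r := f) (Set.injOn_id _) hx
  have hd : ∀ i, p.eval (d i) = f (d i) := fun i =>
    hps _ (Finset.mem_union_left _ (Finset.mem_image_of_mem d (Finset.mem_univ i)))
  have heval : ∀ i, p.eval (e i) = f (e i) := fun i =>
    hps _ (Finset.mem_union_right _ (Finset.mem_image_of_mem e (Finset.mem_univ i)))
  have h1 : aeval M p = U * Matrix.diagonal (fun i => (f (d i) : ℂ)) * star U := by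
    rw [hMdef, aeval_unitary_conj U hU, aeval_diagonal]
    simp only [hd]
  have h2 : aeval M p = V * Matrix.diagonal (fun i => (f (e i) : ℂ)) * star V := by
    conv_lhs => rw [hspec]
    rw [aeval_unitary_conj V hVmem, aeval_diagonal]
    simp only [heval]
  rw [← h2, h1]

lemma kron_star {ι κ : Type*} (U : Matrix ι ι ℂ) (V : Matrix κ κ ℂ) :
    star (U ⊗ₖ V) = star U ⊗ₖ star V := by
  ext ⟨i, j⟩ ⟨k, l⟩
  simp [Matrix.star_eq_conjTranspose, Matrix.conjTranspose_apply, Matrix.kroneckerMap_apply]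

lemma kron_unitary {ι κ : Type*} [Fintype ι] [DecidableEq ι] [Fintype κ] [DecidableEq κ]
    {U : Matrix ι ι ℂ} {V : Matrix κ κ ℂ}
    (hU : U ∈ Matrix.unitaryGroup ι ℂ) (hV : V ∈ Matrix.unitaryGroup κ ℂ) :
    U ⊗ₖ V ∈ Matrix.unitaryGroup (ι × κ) ℂ := by
  rw [Matrix.mem_unitaryGroup_iff]
  rw [kron_star, ← Matrix.mul_kronecker_mul, Matrix.mem_unitaryGroup_iff.mp hU,
    Matrix.mem_unitaryGroup_iff.mp hV, Matrix.one_kronecker_one]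

lemma spectral_coe {ι : Type*} [Fintype ι] [DecidableEq ι] {A : Matrix ι ι ℂ}
    (hA : A.IsHermitian) :
    A = (hA.eigenvectorUnitary : Matrix ι ι ℂ) *
        Matrix.diagonal (fun i => (hA.eigenvalues i : ℂ)) *
        star (hA.eigenvectorUnitary : Matrix ι ι ℂ) := by
  have := hA.spectral_theorem
  rw [Unitary.conjStarAlgAut_apply] at this
  exact this

lemma matLog_posdef {ι : Type*} [Fintype ι] [DecidableEq ι] {A : Matrix ι ι ℂ}
    (hA : A.IsHermitian) :
    matLog A = (hA.eigenvectorUnitary : Matrix ι ι ℂ) *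
        Matrix.diagonal (fun i => (Real.log (hA.eigenvalues i) : ℂ)) *
        star (hA.eigenvectorUnitary : Matrix ι ι ℂ) := by
  conv_lhs => rw [matLog, spectral_coe hA]
  exact matFun_conj Real.log _ hA.eigenvectorUnitary.2 _

lemma matLog_kronecker {ι κ : Type*} [Fintype ι] [DecidableEq ι] [Fintype κ] [DecidableEq κ]
    {A : Matrix ι ι ℂ} {B : Matrix κ κ ℂ} (hA : A.PosDef) (hB : B.PosDef) :
    matLog (A ⊗ₖ B) = (matLog A) ⊗ₖ (1 : Matrix κ κ ℂ) + (1 : Matrix ι ι ℂ) ⊗ₖ (matLog B) := by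
  set U := (hA.1.eigenvectorUnitary : Matrix ι ι ℂ) with hUdef
  set V := (hB.1.eigenvectorUnitary : Matrix κ κ ℂ) with hVdef
  set a := hA.1.eigenvalues with hadef
  set b := hB.1.eigenvalues with hbdef
  have hUm : U ∈ Matrix.unitaryGroup ι ℂ := hA.1.eigenvectorUnitary.2
  have hVm : V ∈ Matrix.unitaryGroup κ ℂ := hB.1.eigenvectorUnitary.2
  have hUVm := kron_unitary hUm hVm
  have hkron : A ⊗ₖ B = (U ⊗ₖ V) *
      Matrix.diagonal (fun p : ι × κ => ((a p.1 * b p.2 : ℝ) : ℂ)) * star (U ⊗ₖ V) := by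
    conv_lhs => rw [spectral_coe hA.1, spectral_coe hB.1]
    rw [Matrix.mul_kronecker_mul, Matrix.mul_kronecker_mul,
      Matrix.diagonal_kronecker_diagonal, kron_star]
    congr 2
    funext p
    push_cast
    ring
  have hdiagsum : (fun p : ι × κ => ((Real.log (a p.1 * b p.2) : ℝ) : ℂ)) =
      (fun p : ι × κ => ((Real.log (a p.1) : ℝ) : ℂ) + ((Real.log (b p.2) : ℝ) : ℂ)) := by
    funext p
    have h1 : a p.1 ≠ 0 := ne_of_gt (hA.eigenvalues_pos p.1)
    have h2 : b p.2 ≠ 0 := ne_of_gt (hB.eigenvalues_pos p.2)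
    simp [Real.log_mul h1 h2]
  rw [matLog, hkron, matFun_conj Real.log _ hUVm, hdiagsum,
    ← Matrix.diagonal_add (d₁ := fun p : ι × κ => ((Real.log (a p.1) : ℝ) : ℂ)) (d₂ := fun p : ι × κ => ((Real.log (b p.2) : ℝ) : ℂ)),
    mul_add, add_mul]
  congr 1
  · rw [matLog_posdef hA.1]
    have hone : (1 : Matrix κ κ ℂ) = V * 1 * star V := by
      rw [mul_one, Matrix.mem_unitaryGroup_iff.mp hVm]
    conv_rhs => rw [hone]
    rw [Matrix.mul_kronecker_mul, Matrix.mul_kronecker_mul, ← kron_star]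
    congr 2
    rw [← Matrix.diagonal_one, Matrix.diagonal_kronecker_diagonal]
    congr 1
    funext p
    simp
    rfl
  · rw [matLog_posdef hB.1]
    have hone : (1 : Matrix ι ι ℂ) = U * 1 * star U := by
      rw [mul_one, Matrix.mem_unitaryGroup_iff.mp hUm]
    conv_rhs => rw [hone]
    rw [Matrix.mul_kronecker_mul, Matrix.mul_kronecker_mul, ← kron_star]
    congr 2
    rw [← Matrix.diagonal_one, Matrix.diagonal_kronecker_diagonal]
    congr 1
    funext p
    simp
    rfl

lemma star_ite (c : Prop) [Decidable c] (a b : ℂ) :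
    star (if c then a else b) = if c then star a else star b := apply_ite star c a b

lemma trace_mul_kron_one {m n : ℕ} (Γ : Matrix (Fin m × Fin n) (Fin m × Fin n) ℂ)
    (X : Matrix (Fin m) (Fin m) ℂ) :
    (Γ * (X ⊗ₖ (1 : Matrix (Fin n) (Fin n) ℂ))).trace = (ptrace₂ Γ * X).trace := by
  simp only [Matrix.trace, Matrix.diag, Matrix.mul_apply, ptrace₂, Matrix.of_apply,
    Matrix.kroneckerMap_apply, Matrix.one_apply, mul_ite, mul_one, mul_zero,
    Fintype.sum_prod_type, Finset.sum_ite_eq, Finset.sum_ite_eq', Finset.mem_univ, if_true,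
    Finset.sum_mul]
  exact Finset.sum_congr rfl fun i _ => Finset.sum_comm

lemma trace_mul_one_kron {m n : ℕ} (Γ : Matrix (Fin m × Fin n) (Fin m × Fin n) ℂ)
    (Y : Matrix (Fin n) (Fin n) ℂ) :
    (Γ * ((1 : Matrix (Fin m) (Fin m) ℂ) ⊗ₖ Y)).trace = (ptrace₁ Γ * Y).trace := by
  simp only [Matrix.trace, Matrix.diag, Matrix.mul_apply, ptrace₁, Matrix.of_apply,
    Matrix.kroneckerMap_apply, Matrix.one_apply, ite_mul, one_mul, zero_mul,
    Fintype.sum_prod_type, Finset.sum_ite_eq, Finset.sum_ite_eq', Finset.mem_univ, if_true,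
    Finset.sum_mul]
  rw [Finset.sum_comm]
  refine Finset.sum_congr rfl fun j _ => ?_
  trans ∑ x : Fin m, ∑ x₂ : Fin n, Γ (x, j) (x, x₂) * Y x₂ j
  · refine Finset.sum_congr rfl fun i _ => ?_
    rw [Finset.sum_comm]
    refine Finset.sum_congr rfl fun j' _ => ?_
    simp
  · rw [Finset.sum_comm]

lemma ptrace₂_trace {m n : ℕ} (Γ : Matrix (Fin m × Fin n) (Fin m × Fin n) ℂ) :
    (ptrace₂ Γ).trace = Γ.trace := by
  simp [Matrix.trace, ptrace₂, Matrix.diag, Fintype.sum_prod_type]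

lemma ptrace₁_trace {m n : ℕ} (Γ : Matrix (Fin m × Fin n) (Fin m × Fin n) ℂ) :
    (ptrace₁ Γ).trace = Γ.trace := by
  simp only [Matrix.trace, ptrace₁, Matrix.diag, Matrix.of_apply, Fintype.sum_prod_type]
  exact Finset.sum_comm

lemma ptrace₂_posDef {m n : ℕ} {Γ : Matrix (Fin m × Fin n) (Fin m × Fin n) ℂ}
    (hΓ : Γ.PosDef) (hn : n ≠ 0) : (ptrace₂ Γ).PosDef := by
  refine Matrix.posDef_iff_dotProduct_mulVec.mpr ⟨?_, ?_⟩
  · ext i i'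
    simp only [Matrix.conjTranspose_apply, ptrace₂, Matrix.of_apply, star_sum]
    exact Finset.sum_congr rfl fun j _ => hΓ.1.apply _ _
  · intro x hx
    have key : dotProduct (star x) (ptrace₂ Γ *ᵥ x) =
        ∑ j : Fin n, dotProduct (star (fun p : Fin m × Fin n => if p.2 = j then x p.1 else 0))
          (Γ *ᵥ (fun p : Fin m × Fin n => if p.2 = j then x p.1 else 0)) := by
      simp only [dotProduct, Matrix.mulVec, ptrace₂, Matrix.of_apply, Pi.star_apply,
        Fintype.sum_prod_type, star_ite, star_zero, ite_mul, mul_ite, mul_zero, zero_mul,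
        Finset.sum_ite_eq, Finset.sum_ite_eq', Finset.mem_univ, if_true, Finset.mul_sum,
        Finset.sum_mul]
      refine (Finset.sum_congr rfl fun x₁ _ => Finset.sum_comm).trans ?_
      refine Finset.sum_comm.trans ?_
      refine Finset.sum_congr rfl fun j _ => ?_
      refine Finset.sum_congr rfl fun i _ => ?_
      rw [Finset.sum_comm]
      simp [Finset.sum_ite_eq']
    rw [key]
    obtain ⟨i₀, hi₀⟩ : ∃ i₀, x i₀ ≠ 0 := Function.ne_iff.mp hx
    obtain ⟨j₀⟩ : Nonempty (Fin n) := ⟨⟨0, Nat.pos_of_ne_zero hn⟩⟩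
    have hy : (fun p : Fin m × Fin n => if p.2 = j₀ then x p.1 else 0) ≠ 0 := by
      intro h
      have := congrFun h (i₀, j₀)
      simp at this
      exact hi₀ this
    refine Finset.sum_pos' (fun j _ => ?_) ⟨j₀, Finset.mem_univ j₀, hΓ.dotProduct_mulVec_pos hy⟩
    by_cases h : (fun p : Fin m × Fin n => if p.2 = j then x p.1 else 0) = 0
    · rw [h]; simp
    · exact le_of_lt (hΓ.dotProduct_mulVec_pos h)

lemma ptrace₁_posDef {m n : ℕ} {Γ : Matrix (Fin m × Fin n) (Fin m × Fin n) ℂ}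
    (hΓ : Γ.PosDef) (hm : m ≠ 0) : (ptrace₁ Γ).PosDef := by
  refine Matrix.posDef_iff_dotProduct_mulVec.mpr ⟨?_, ?_⟩
  · ext j j'
    simp only [Matrix.conjTranspose_apply, ptrace₁, Matrix.of_apply, star_sum]
    exact Finset.sum_congr rfl fun i _ => hΓ.1.apply _ _
  · intro x hx
    have key : dotProduct (star x) (ptrace₁ Γ *ᵥ x) =
        ∑ i : Fin m, dotProduct (star (fun p : Fin m × Fin n => if p.1 = i then x p.2 else 0))
          (Γ *ᵥ (fun p : Fin m × Fin n => if p.1 = i then x p.2 else 0)) := by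
      simp only [dotProduct, Matrix.mulVec, ptrace₁, Matrix.of_apply, Pi.star_apply,
        Fintype.sum_prod_type_right, star_ite, star_zero, ite_mul, mul_ite, mul_zero, zero_mul,
        Finset.sum_ite_eq, Finset.sum_ite_eq', Finset.mem_univ, if_true, Finset.mul_sum,
        Finset.sum_mul]
      refine (Finset.sum_congr rfl fun x₁ _ => Finset.sum_comm).trans ?_
      refine Finset.sum_comm.trans ?_
      refine Finset.sum_congr rfl fun i _ => ?_
      refine Finset.sum_congr rfl fun j _ => ?_
      rw [Finset.sum_comm]
      simp [Finset.sum_ite_eq']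
    rw [key]
    obtain ⟨j₀, hj₀⟩ : ∃ j₀, x j₀ ≠ 0 := Function.ne_iff.mp hx
    obtain ⟨i₀⟩ : Nonempty (Fin m) := ⟨⟨0, Nat.pos_of_ne_zero hm⟩⟩
    have hy : (fun p : Fin m × Fin n => if p.1 = i₀ then x p.2 else 0) ≠ 0 := by
      intro h
      have := congrFun h (i₀, j₀)
      simp at this
      exact hj₀ this
    refine Finset.sum_pos' (fun i _ => ?_) ⟨i₀, Finset.mem_univ i₀, hΓ.dotProduct_mulVec_pos hy⟩
    by_cases h : (fun p : Fin m × Fin n => if p.1 = i then x p.2 else 0) = 0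
    · rw [h]; simp
    · exact le_of_lt (hΓ.dotProduct_mulVec_pos h)

/-- **Relative entropy decomposition for product reference states.**  For a positive definite
density matrix `Γ` on `ℂᵐ ⊗ ℂⁿ` with marginals `Γ₁, Γ₂` (which are themselves positive
definite density matrices) and positive definite density matrices `A` on `ℂᵐ`, `B` on `ℂⁿ`,
`H(Γ, A ⊗ B) = H(Γ, Γ₁ ⊗ Γ₂) + H(Γ₁, A) + H(Γ₂, B)`. -/
theorem relEnt_product_decomposition {m n : ℕ}
    (Γ : Matrix (Fin m × Fin n) (Fin m × Fin n) ℂ) (hΓ : Γ.PosDef) (hΓtr : Γ.trace = 1)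
    (A : Matrix (Fin m) (Fin m) ℂ) (hA : A.PosDef) (hAtr : A.trace = 1)
    (B : Matrix (Fin n) (Fin n) ℂ) (hB : B.PosDef) (hBtr : B.trace = 1) :
    ((ptrace₂ Γ).PosDef ∧ (ptrace₂ Γ).trace = 1) ∧
    ((ptrace₁ Γ).PosDef ∧ (ptrace₁ Γ).trace = 1) ∧
    relEnt Γ (A ⊗ₖ B) =
      relEnt Γ (ptrace₂ Γ ⊗ₖ ptrace₁ Γ) + relEnt (ptrace₂ Γ) A + relEnt (ptrace₁ Γ) B := by
  have hn : n ≠ 0 := by rintro rfl; simp [Matrix.trace, Fintype.sum_prod_type] at hΓtr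
  have hm : m ≠ 0 := by rintro rfl; simp [Matrix.trace, Fintype.sum_prod_type] at hΓtr
  have h1 := ptrace₂_posDef hΓ hn
  have h2 := ptrace₁_posDef hΓ hm
  refine ⟨⟨h1, by rw [ptrace₂_trace]; exact hΓtr⟩, ⟨h2, by rw [ptrace₁_trace]; exact hΓtr⟩, ?_⟩
  have key : ∀ (X : Matrix (Fin m) (Fin m) ℂ) (Y : Matrix (Fin n) (Fin n) ℂ),
      X.PosDef → Y.PosDef →
      relEnt Γ (X ⊗ₖ Y) = (Γ * matLog Γ).trace - (ptrace₂ Γ * matLog X).trace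
        - (ptrace₁ Γ * matLog Y).trace := by
    intro X Y hX hY
    rw [relEnt, mul_sub, Matrix.trace_sub, matLog_kronecker hX hY, mul_add, Matrix.trace_add,
      trace_mul_kron_one, trace_mul_one_kron]
    ring
  have hEA : relEnt (ptrace₂ Γ) A =
      (ptrace₂ Γ * matLog (ptrace₂ Γ)).trace - (ptrace₂ Γ * matLog A).trace := by
    rw [relEnt, mul_sub, Matrix.trace_sub]
  have hEB : relEnt (ptrace₁ Γ) B =
      (ptrace₁ Γ * matLog (ptrace₁ Γ)).trace - (ptrace₁ Γ * matLog B).trace := by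
    rw [relEnt, mul_sub, Matrix.trace_sub]
  rw [key A B hA hB, key _ _ h1 h2, hEA, hEB]
  ring
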